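/- Let G be a graph having a clique cutset decomposition tree of depth p ≥ 1 with splits (A_i, K_i, B_i) for 0 ≤ i ≤ p−1, set B_p = A_{p−1} and K_p = K_{p−1}, and let w be a function assigning a non-negative integer weight to each vertex of G (with w(A) denoting the sum of the weights over a vertex set A). Then one of the following holds: (1) for some i ∈ {0, 1, …, p−1}, K_i is a clique cutset of G for which there exists a split (A, K_i, B) of G with w(A) ≥ 2 and w(B) ≥ 2; or (2) for some i ∈ {0, 1, …, p}, every connected component C of G − (K_i ∪ B_i) satisfies w(C) ≤ 1. -/

import Mathlib

open SimpleGraph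

universe u

variable {V : Type u}

/-- A hole: a chordless cycle of length at least 4. -/
def IsHole (G : SimpleGraph V) {v : V} (c : G.Walk v v) : Prop :=
  c.IsCycle ∧ 4 ≤ c.length ∧
    ∀ x ∈ c.support, ∀ y ∈ c.support, G.Adj x y → s(x, y) ∈ c.edges

/-- There is a hole of `G` passing through both `u` and `v`. -/
def HasHoleThrough (G : SimpleGraph V) (u v : V) : Prop :=
  ∃ (w : V) (c : G.Walk w w), IsHole G c ∧ u ∈ c.support ∧ v ∈ c.support

/-- `G` contains a theta as an induced subgraph: three internally vertex-disjoint
paths of length at least 2 between two distinct vertices, with no further edges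
among the vertices of the three paths. -/
def ContainsTheta (G : SimpleGraph V) : Prop :=
  ∃ (a b : V) (P₁ P₂ P₃ : G.Walk a b),
    a ≠ b ∧ P₁.IsPath ∧ P₂.IsPath ∧ P₃.IsPath ∧
    2 ≤ P₁.length ∧ 2 ≤ P₂.length ∧ 2 ≤ P₃.length ∧
    (∀ x ∈ P₁.support, x ∈ P₂.support → x = a ∨ x = b) ∧
    (∀ x ∈ P₁.support, x ∈ P₃.support → x = a ∨ x = b) ∧
    (∀ x ∈ P₂.support, x ∈ P₃.support → x = a ∨ x = b) ∧
    (∀ x y : V, (x ∈ P₁.support ∨ x ∈ P₂.support ∨ x ∈ P₃.support) →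
      (y ∈ P₁.support ∨ y ∈ P₂.support ∨ y ∈ P₃.support) → G.Adj x y →
      s(x, y) ∈ P₁.edges ∨ s(x, y) ∈ P₂.edges ∨ s(x, y) ∈ P₃.edges)

/-- `G` contains a wheel as an induced subgraph: a hole together with a vertex
having at least 3 neighbors on the hole. -/
def ContainsWheel (G : SimpleGraph V) : Prop :=
  ∃ (w : V) (c : G.Walk w w) (x y₁ y₂ y₃ : V),
    IsHole G c ∧ x ∉ c.support ∧
    y₁ ∈ c.support ∧ y₂ ∈ c.support ∧ y₃ ∈ c.support ∧
    y₁ ≠ y₂ ∧ y₁ ≠ y₃ ∧ y₂ ≠ y₃ ∧ G.Adj x y₁ ∧ G.Adj x y₂ ∧ G.Adj x y₃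

/-- `G` contains a diamond (K₄ minus an edge) as an induced subgraph. -/
def ContainsDiamond (G : SimpleGraph V) : Prop :=
  ∃ a b c d : V, a ≠ b ∧ a ≠ c ∧ a ≠ d ∧ b ≠ c ∧ b ≠ d ∧ c ≠ d ∧
    ¬ G.Adj a b ∧ G.Adj a c ∧ G.Adj a d ∧ G.Adj b c ∧ G.Adj b d ∧ G.Adj c d

/-- `G` contains a claw (K_{1,3}) as an induced subgraph. -/
def ContainsClaw (G : SimpleGraph V) : Prop :=
  ∃ u v₁ v₂ v₃ : V, v₁ ≠ v₂ ∧ v₁ ≠ v₃ ∧ v₂ ≠ v₃ ∧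
    G.Adj u v₁ ∧ G.Adj u v₂ ∧ G.Adj u v₃ ∧
    ¬ G.Adj v₁ v₂ ∧ ¬ G.Adj v₁ v₃ ∧ ¬ G.Adj v₂ v₃

/-- `(A, K, B)` is a split witnessing that `K` is a cutset of `G`:
`A` and `B` are nonempty, the three sets partition the vertex set,
and there are no edges between `A` and `B`. -/
def IsCutsetSplit (G : SimpleGraph V) (A K B : Set V) : Prop :=
  A.Nonempty ∧ B.Nonempty ∧ Disjoint A K ∧ Disjoint A B ∧ Disjoint K B ∧
    A ∪ K ∪ B = Set.univ ∧ ∀ a ∈ A, ∀ b ∈ B, ¬ G.Adj a b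

/-- `G` has a clique cutset. -/
def HasCliqueCutset (G : SimpleGraph V) : Prop :=
  ∃ K A B : Set V, G.IsClique K ∧ IsCutsetSplit G A K B

/-- Some clique cutset of `G` separates `u` and `v`. -/
def CliqueCutsetSeparates (G : SimpleGraph V) (u v : V) : Prop :=
  ∃ K A B : Set V, G.IsClique K ∧ IsCutsetSplit G A K B ∧ u ∈ A ∧ v ∈ B

/-- `G` has a star cutset: a nonempty cutset containing a vertex adjacent to
all other vertices of the cutset. -/
def HasStarCutset (G : SimpleGraph V) : Prop :=
  ∃ S A B : Set V, S.Nonempty ∧ IsCutsetSplit G A S B ∧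
    ∃ x ∈ S, ∀ y ∈ S, y ≠ x → G.Adj x y

/-- `u` and `v` are joined by a walk all of whose vertices lie in `X`. -/
def ReachableWithin (G : SimpleGraph V) (X : Set V) (u v : V) : Prop :=
  ∃ p : G.Walk u v, ∀ x ∈ p.support, x ∈ X

/-- `C` is a connected component of the subgraph of `G` induced by `X`. -/
def IsCompOf (G : SimpleGraph V) (X C : Set V) : Prop :=
  C.Nonempty ∧ C ⊆ X ∧ (∀ u ∈ C, ∀ v ∈ C, ReachableWithin G X u v) ∧
    ∀ u ∈ C, ∀ v ∈ X, G.Adj u v → v ∈ C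

/-- The subgraph of `G` induced by `A` is a disjoint union of cliques. -/
def UnionOfCliques (G : SimpleGraph V) (A : Set V) : Prop :=
  ∀ x ∈ A, ∀ y ∈ A, ∀ z ∈ A, G.Adj x y → G.Adj y z → x ≠ z → G.Adj x z

/-- `(X₁, X₂, A₁, A₂, B₁, B₂)` is a split of an almost 2-join of `G`. -/
def AlmostTwoJoinSplit (G : SimpleGraph V) (X₁ X₂ A₁ A₂ B₁ B₂ : Set V) : Prop :=
  Disjoint X₁ X₂ ∧ X₁ ∪ X₂ = Set.univ ∧ 3 ≤ X₁.ncard ∧ 3 ≤ X₂.ncard ∧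
  A₁.Nonempty ∧ B₁.Nonempty ∧ A₂.Nonempty ∧ B₂.Nonempty ∧
  A₁ ⊆ X₁ ∧ B₁ ⊆ X₁ ∧ A₂ ⊆ X₂ ∧ B₂ ⊆ X₂ ∧
  Disjoint A₁ B₁ ∧ Disjoint A₂ B₂ ∧
  (∀ a ∈ A₁, ∀ b ∈ A₂, G.Adj a b) ∧
  (∀ a ∈ B₁, ∀ b ∈ B₂, G.Adj a b) ∧
  (∀ x ∈ X₁, ∀ y ∈ X₂, G.Adj x y → (x ∈ A₁ ∧ y ∈ A₂) ∨ (x ∈ B₁ ∧ y ∈ B₂))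

/-- The subgraph of `G` induced by `X` is a chordless path. -/
def InducesPath (G : SimpleGraph V) (X : Set V) : Prop :=
  ∃ (u v : V) (p : G.Walk u v), p.IsPath ∧ (∀ x : V, x ∈ p.support ↔ x ∈ X) ∧
    ∀ x ∈ X, ∀ y ∈ X, G.Adj x y → s(x, y) ∈ p.edges

/-- `(X₁, X₂, A₁, A₂, B₁, B₂)` is a split of a 2-join of `G`. -/
def TwoJoinSplit (G : SimpleGraph V) (X₁ X₂ A₁ A₂ B₁ B₂ : Set V) : Prop :=
  AlmostTwoJoinSplit G X₁ X₂ A₁ A₂ B₁ B₂ ∧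
  (∃ a ∈ A₁, ∃ b ∈ B₁, ReachableWithin G X₁ a b) ∧
  (∃ a ∈ A₂, ∃ b ∈ B₂, ReachableWithin G X₂ a b) ∧
  (A₁.ncard = 1 → B₁.ncard = 1 → ¬ InducesPath G X₁) ∧
  (A₂.ncard = 1 → B₂.ncard = 1 → ¬ InducesPath G X₂)

/-- `(X₁, X₂, A₁, A₂, B₁, B₂)` is a split of a minimally-sided 2-join of `G`,
with `X₁` a minimal side. -/
def MinimallySidedTwoJoin (G : SimpleGraph V) (X₁ X₂ A₁ A₂ B₁ B₂ : Set V) : Prop :=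
  TwoJoinSplit G X₁ X₂ A₁ A₂ B₁ B₂ ∧
  ∀ Y₁ Y₂ C₁ C₂ D₁ D₂ : Set V, TwoJoinSplit G Y₁ Y₂ C₁ C₂ D₁ D₂ →
    ¬ Y₁ ⊂ X₁ ∧ ¬ Y₂ ⊂ X₁

/-- Conditions (i)–(iii) and (vi)–(viii) of consistency of an almost 2-join,
for the side `X` with special sets `A` and `B`. -/
def ConsistentSide (G : SimpleGraph V) (X A B : Set V) : Prop :=
  (∀ C : Set V, IsCompOf G X C → (C ∩ A).Nonempty ∧ (C ∩ B).Nonempty) ∧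
  (∀ a ∈ A, ∃ b ∈ B, ¬ G.Adj a b) ∧
  (∀ b ∈ B, ∃ a ∈ A, ¬ G.Adj b a) ∧
  (∀ u ∈ X, ∀ v ∈ X, ReachableWithin G X u v) ∧
  (∀ v ∈ X, ∃ b ∈ B, ∃ p : G.Walk v b, p.IsPath ∧ (∀ x ∈ p.support, x ∈ X) ∧
    ∀ x ∈ p.support, x ∈ A → x = v ∨ x = b) ∧
  (∀ v ∈ X, ∃ a ∈ A, ∃ p : G.Walk v a, p.IsPath ∧ (∀ x ∈ p.support, x ∈ X) ∧
    ∀ x ∈ p.support, x ∈ B → x = v ∨ x = a)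

/-- The block of decomposition of `G` with respect to a 2-join, keeping the side `X`
(with special sets `A`, `B`) and replacing the other side by a marker path of
length `k` whose endpoint `0` is complete to `A` and endpoint `k` is complete to `B`. -/
def TwoJoinBlock (G : SimpleGraph V) (X A B : Set V) (k : ℕ) :
    SimpleGraph (↥X ⊕ Fin (k + 1)) where
  Adj x y :=
    match x, y with
    | Sum.inl a, Sum.inl b => G.Adj ↑a ↑b
    | Sum.inl a, Sum.inr i => ((a : V) ∈ A ∧ i = 0) ∨ ((a : V) ∈ B ∧ i = Fin.last k)
    | Sum.inr i, Sum.inl a => ((a : V) ∈ A ∧ i = 0) ∨ ((a : V) ∈ B ∧ i = Fin.last k)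
    | Sum.inr i, Sum.inr j => (i : ℕ) + 1 = (j : ℕ) ∨ (j : ℕ) + 1 = (i : ℕ)
  symm := by
    constructor
    rintro (a | i) (b | j) h
    · exact h.symm
    · exact h
    · exact h
    · exact Or.symm h
  loopless := by
    constructor
    rintro (a | i) h
    · exact G.loopless.irrefl _ h
    · rcases h with h | h <;> omega

/-- A graph is chordless if no cycle in it has a chord. -/
def ChordlessGraph (G : SimpleGraph V) : Prop :=
  ∀ (u : V) (c : G.Walk u u), c.IsCycle →
    ∀ x ∈ c.support, ∀ y ∈ c.support, G.Adj x y → s(x, y) ∈ c.edges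

/-- The subgraph of `G` induced by `S` has a clique cutset. -/
def HasCliqueCutsetOn (G : SimpleGraph V) (S : Set V) : Prop :=
  ∃ K A B : Set V, G.IsClique K ∧ A.Nonempty ∧ B.Nonempty ∧ Disjoint A K ∧
    Disjoint A B ∧ Disjoint K B ∧ A ∪ K ∪ B = S ∧ ∀ a ∈ A, ∀ b ∈ B, ¬ G.Adj a b

/-- The total weight of a set of vertices. -/
noncomputable def wsum [Fintype V] (w : V → ℕ) (A : Set V) : ℕ :=
  ∑ v ∈ A.toFinite.toFinset, w v

section Stmt9Helpers

variable {V : Type u} {G : SimpleGraph V}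

private lemma stmt9_wsum_mono [Fintype V] (w : V → ℕ) {A B : Set V} (h : A ⊆ B) :
    wsum w A ≤ wsum w B := by
  unfold wsum
  apply Finset.sum_le_sum_of_subset
  intro x hx
  simp only [Set.Finite.mem_toFinset] at *
  exact h hx

private lemma stmt9_rw_refl {X : Set V} {u : V} (hu : u ∈ X) :
    ReachableWithin G X u u :=
  ⟨SimpleGraph.Walk.nil, by
    intro x hx
    rw [SimpleGraph.Walk.support_nil, List.mem_singleton] at hx
    exact hx ▸ hu⟩

private lemma stmt9_rw_symm {X : Set V} {u v : V} (h : ReachableWithin G X u v) :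
    ReachableWithin G X v u := by
  obtain ⟨p, hp⟩ := h
  exact ⟨p.reverse, fun x hx => hp x (by
    rwa [SimpleGraph.Walk.support_reverse, List.mem_reverse] at hx)⟩

private lemma stmt9_rw_trans {X : Set V} {u v z : V} (h : ReachableWithin G X u v)
    (h' : ReachableWithin G X v z) : ReachableWithin G X u z := by
  obtain ⟨p, hp⟩ := h; obtain ⟨q, hq⟩ := h'
  refine ⟨p.append q, fun x hx => ?_⟩
  rw [SimpleGraph.Walk.mem_support_append_iff] at hx
  exact hx.elim (hp x) (hq x)

private lemma stmt9_rw_adj {X : Set V} {v z : V} (hv : v ∈ X) (hz : z ∈ X)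
    (ha : G.Adj v z) : ReachableWithin G X v z :=
  ⟨SimpleGraph.Walk.cons ha SimpleGraph.Walk.nil, by
    intro x hx
    rw [SimpleGraph.Walk.support_cons, SimpleGraph.Walk.support_nil, List.mem_cons,
      List.mem_singleton] at hx
    rcases hx with rfl | rfl
    exacts [hv, hz]⟩

private lemma stmt9_rw_mono {X Y : Set V} (hXY : X ⊆ Y) {u v : V}
    (h : ReachableWithin G X u v) : ReachableWithin G Y u v := by
  obtain ⟨p, hp⟩ := h
  exact ⟨p, fun x hx => hXY (hp x hx)⟩

private lemma stmt9_mem_of_walk_closed {X C : Set V}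
    (hcl : ∀ u ∈ C, ∀ v ∈ X, G.Adj u v → v ∈ C) :
    ∀ {u v : V} (p : G.Walk u v), (∀ x ∈ p.support, x ∈ X) → u ∈ C →
      ∀ x ∈ p.support, x ∈ C := by
  intro u v p
  induction p with
  | nil =>
      intro _ hu x hx
      rw [SimpleGraph.Walk.support_nil, List.mem_singleton] at hx
      exact hx ▸ hu
  | @cons a b c h q ih =>
      intro hX hu x hx
      have hbX : b ∈ X := hX b (by
        rw [SimpleGraph.Walk.support_cons]
        exact List.mem_cons_of_mem _ q.start_mem_support)
      have hbC : b ∈ C := hcl a hu b hbX h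
      have hX' : ∀ y ∈ q.support, y ∈ X := fun y hy => hX y (by
        rw [SimpleGraph.Walk.support_cons]; exact List.mem_cons_of_mem _ hy)
      rw [SimpleGraph.Walk.support_cons, List.mem_cons] at hx
      rcases hx with rfl | hx
      · exact hu
      · exact ih hX' hbC x hx

private lemma stmt9_boundary {S T : Set V} :
    ∀ {u v : V} (p : G.Walk u v), (∀ x ∈ p.support, x ∈ T) → u ∉ S → v ∈ S →
      ∃ x y, G.Adj x y ∧ x ∈ T ∧ x ∉ S ∧ y ∈ T ∧ y ∈ S ∧
        ReachableWithin G (T ∩ Sᶜ) u x := by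
  intro u v p
  induction p with
  | nil => intro _ hu hv; exact absurd hv hu
  | @cons a b c h q ih =>
      intro hT ha hc
      have haT : a ∈ T := hT a (by
        rw [SimpleGraph.Walk.support_cons]; exact List.mem_cons_self)
      have hbT : b ∈ T := hT b (by
        rw [SimpleGraph.Walk.support_cons]
        exact List.mem_cons_of_mem _ q.start_mem_support)
      have hT' : ∀ x ∈ q.support, x ∈ T := fun x hx => hT x (by
        rw [SimpleGraph.Walk.support_cons]; exact List.mem_cons_of_mem _ hx)
      by_cases hbS : b ∈ S
      · exact ⟨a, b, h, haT, ha, hbT, hbS, stmt9_rw_refl ⟨haT, ha⟩⟩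
      · obtain ⟨x, y, h1, h2, h3, h4, h5, h6⟩ := ih hT' hbS hc
        exact ⟨x, y, h1, h2, h3, h4, h5,
          stmt9_rw_trans (stmt9_rw_adj ⟨haT, ha⟩ ⟨hbT, hbS⟩ h) h6⟩

private lemma stmt9_reach_comp {X : Set V} {c : V} (hc : c ∈ X) :
    IsCompOf G X {v | ReachableWithin G X c v} := by
  refine ⟨⟨c, stmt9_rw_refl hc⟩, ?_, ?_, ?_⟩
  · intro v hv
    obtain ⟨q, hq⟩ := hv
    exact hq v q.end_mem_support
  · intro u hu v hv
    exact stmt9_rw_trans (stmt9_rw_symm hu) hv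
  · intro u hu v hv hadj
    have huX : u ∈ X := by
      obtain ⟨q, hq⟩ := hu
      exact hq u q.end_mem_support
    exact stmt9_rw_trans hu (stmt9_rw_adj huX hv hadj)

end Stmt9Helpers

/-- Let G be a graph having a clique cutset decomposition tree of depth p ≥ 1 with
splits (Aᵢ, Kᵢ, Bᵢ) for 0 ≤ i ≤ p−1, set B_p = A_{p−1} and K_p = K_{p−1}, and let w
assign a non-negative integer weight to each vertex. Then either some Kᵢ is a clique
cutset of G admitting a split (A, Kᵢ, B) of G with w(A) ≥ 2 and w(B) ≥ 2, or for some
i ∈ {0, …, p} every connected component C of G − (Kᵢ ∪ Bᵢ) satisfies w(C) ≤ 1. -/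
theorem stmt9 {V : Type u} [Fintype V] (G : SimpleGraph V)
    (p : ℕ) (hp : 1 ≤ p) (A K B Vs : ℕ → Set V)
    (hV0 : Vs 0 = Set.univ)
    (hVsucc : ∀ i < p, Vs (i + 1) = A i ∪ K i)
    (hsplit : ∀ i < p, (A i).Nonempty ∧ (B i).Nonempty ∧
      Disjoint (A i) (K i) ∧ Disjoint (A i) (B i) ∧ Disjoint (K i) (B i) ∧
      A i ∪ K i ∪ B i = Vs i ∧ G.IsClique (K i) ∧
      ∀ a ∈ A i, ∀ b ∈ B i, ¬ G.Adj a b)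
    (hleaf : ∀ i < p, ¬ HasCliqueCutsetOn G (K i ∪ B i))
    (hlast : ¬ HasCliqueCutsetOn G (Vs p))
    (w : V → ℕ) :
    (∃ i < p, ∃ A' B' : Set V, G.IsClique (K i) ∧ IsCutsetSplit G A' (K i) B' ∧
      2 ≤ wsum w A' ∧ 2 ≤ wsum w B') ∨
    (∃ i < p, ∀ C : Set V, IsCompOf G (K i ∪ B i)ᶜ C → wsum w C ≤ 1) ∨
    (∀ C : Set V, IsCompOf G (K (p - 1) ∪ A (p - 1))ᶜ C → wsum w C ≤ 1) := by
  classical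
  have key : ∀ i, i ≤ p →
      ((∃ i < p, ∃ A' B' : Set V, G.IsClique (K i) ∧ IsCutsetSplit G A' (K i) B' ∧
          2 ≤ wsum w A' ∧ 2 ≤ wsum w B') ∨
        (∃ i < p, ∀ C : Set V, IsCompOf G (K i ∪ B i)ᶜ C → wsum w C ≤ 1) ∨
        (∀ C : Set V, IsCompOf G (K (p - 1) ∪ A (p - 1))ᶜ C → wsum w C ≤ 1)) ∨
      (∀ C : Set V, IsCompOf G (Vs i)ᶜ C → wsum w C ≤ 1 ∧
        G.IsClique {v | v ∈ Vs i ∧ ∃ u ∈ C, G.Adj u v}) := by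
    intro i
    induction i with
    | zero =>
        intro _
        right
        intro C hC
        obtain ⟨c, hc⟩ := hC.1
        have hc' := hC.2.1 hc
        rw [hV0] at hc'
        simp at hc'
    | succ i ih =>
        intro hip
        have hi : i < p := Nat.lt_of_succ_le hip
        rcases ih (Nat.le_of_lt hi) with hdone | inv
        · exact Or.inl hdone
        obtain ⟨hAne, hBne, hAK, hAB, hKB, hUnion, hKcl, hnoe⟩ := hsplit i hi
        have hVs1 : Vs (i + 1) = A i ∪ K i := hVsucc i hi
        have hmemVs : ∀ x, x ∈ Vs i → x ∈ A i ∨ x ∈ K i ∨ x ∈ B i := by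
          intro x hx
          rw [← hUnion] at hx
          rcases hx with (h | h) | h
          exacts [Or.inl h, Or.inr (Or.inl h), Or.inr (Or.inr h)]
        have hAsub : A i ⊆ Vs i := by
          rw [← hUnion]; exact fun x hx => Or.inl (Or.inl hx)
        have hKsub : K i ⊆ Vs i := by
          rw [← hUnion]; exact fun x hx => Or.inl (Or.inr hx)
        have hBsub : B i ⊆ Vs i := by
          rw [← hUnion]; exact fun x hx => Or.inr hx
        have hAmem : ∀ x ∈ A i, x ∈ Vs (i + 1) := fun x hx => hVs1 ▸ Or.inl hx
        have hKmem : ∀ x ∈ K i, x ∈ Vs (i + 1) := fun x hx => hVs1 ▸ Or.inr hx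
        have hsubV : Vs (i + 1) ⊆ Vs i := by
          rw [hVs1]
          exact fun x hx => hx.elim (fun h => hAsub h) (fun h => hKsub h)
        have fact1 : ∀ x, x ∉ Vs (i + 1) → x ∉ B i → x ∉ Vs i := by
          intro x h1 h2 hx
          rcases hmemVs x hx with h | h | h
          · exact h1 (hAmem x h)
          · exact h1 (hKmem x h)
          · exact h2 h
        have NB : ∀ D : Set V, IsCompOf G (Vs (i + 1))ᶜ D → ∀ b₀ ∈ D, b₀ ∈ B i →
            ∀ u ∈ D, ∀ v ∈ Vs (i + 1), G.Adj u v → v ∈ K i := by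
          intro D hD b₀ hb₀D hb₀B u huD v hv hadj
          rw [hVs1] at hv
          rcases hv with hvA | hvK
          · exfalso
            have huc : u ∉ Vs (i + 1) := hD.2.1 huD
            by_cases huVs : u ∈ Vs i
            · have huB : u ∈ B i := by
                rcases hmemVs u huVs with h | h | h
                · exact absurd (hAmem u h) huc
                · exact absurd (hKmem u h) huc
                · exact h
              exact hnoe v hvA u huB hadj.symm
            · obtain ⟨pw, hpw⟩ := hD.2.2.1 u huD b₀ hb₀D
              obtain ⟨x, y, hxy, hxT, hxS, hyT, hyS, hreach⟩ :=
                stmt9_boundary (S := Vs i) pw hpw huVs (hBsub hb₀B)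
              have hreach' : ReachableWithin G (Vs i)ᶜ u x :=
                stmt9_rw_mono Set.inter_subset_right hreach
              have hEcomp := stmt9_reach_comp (G := G) (X := (Vs i)ᶜ) (c := u) huVs
              obtain ⟨-, hclE⟩ := inv _ hEcomp
              have hyB : y ∈ B i := by
                rcases hmemVs y hyS with h | h | h
                · exact absurd (hAmem y h) hyT
                · exact absurd (hKmem y h) hyT
                · exact h
              have hvNE : v ∈ {z | z ∈ Vs i ∧
                  ∃ u' ∈ {z' | ReachableWithin G (Vs i)ᶜ u z'}, G.Adj u' z} :=
                ⟨hAsub hvA, u, stmt9_rw_refl huVs, hadj⟩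
              have hyNE : y ∈ {z | z ∈ Vs i ∧
                  ∃ u' ∈ {z' | ReachableWithin G (Vs i)ᶜ u z'}, G.Adj u' z} :=
                ⟨hyS, x, hreach', hxy⟩
              have hne : v ≠ y := by
                rintro rfl
                exact Set.disjoint_left.mp hAB hvA hyB
              exact hnoe v hvA y hyB (hclE hvNE hyNE hne)
          · exact hvK
        have pure : ∀ D : Set V, IsCompOf G (Vs (i + 1))ᶜ D → (∀ b ∈ D, b ∉ B i) →
            ∀ u₀ ∈ D, u₀ ∉ Vs i ∧ D ⊆ {z | ReachableWithin G (Vs i)ᶜ u₀ z} := by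
          intro D hD hDB u₀ hu₀
          have hu₀X : u₀ ∉ Vs i := fact1 u₀ (hD.2.1 hu₀) (hDB u₀ hu₀)
          refine ⟨hu₀X, fun u hu => ?_⟩
          obtain ⟨pw, hpw⟩ := hD.2.2.1 u₀ hu₀ u hu
          have hsupD : ∀ x ∈ pw.support, x ∈ D :=
            stmt9_mem_of_walk_closed hD.2.2.2 pw hpw hu₀
          exact ⟨pw, fun x hx => fact1 x (hD.2.1 (hsupD x hx)) (hDB x (hsupD x hx))⟩
        by_cases hheavy : ∃ D : Set V, IsCompOf G (Vs (i + 1))ᶜ D ∧ 2 ≤ wsum w D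
        · left
          obtain ⟨D, hD, hD2⟩ := hheavy
          have hDBne : ∃ b ∈ D, b ∈ B i := by
            by_contra hcon
            push_neg at hcon
            obtain ⟨u₀, hu₀⟩ := hD.1
            obtain ⟨hu₀X, hDE⟩ := pure D hD hcon u₀ hu₀
            have h1 := (inv _ (stmt9_reach_comp (G := G) (X := (Vs i)ᶜ) hu₀X)).1
            have h2 := stmt9_wsum_mono w hDE
            omega
          obtain ⟨b₀, hb₀D, hb₀B⟩ := hDBne
          have hND := NB D hD b₀ hb₀D hb₀B
          have hKD : Disjoint (K i) D := by
            rw [Set.disjoint_left]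
            intro x hx hxD
            exact hD.2.1 hxD (hKmem x hx)
          have hsplitG : IsCutsetSplit G (K i ∪ D)ᶜ (K i) D := by
            refine ⟨?_, hD.1, ?_, ?_, hKD, ?_, ?_⟩
            · obtain ⟨a, ha⟩ := hAne
              refine ⟨a, ?_⟩
              rw [Set.mem_compl_iff, Set.mem_union]
              push_neg
              exact ⟨fun h => Set.disjoint_left.mp hAK ha h,
                fun h => hD.2.1 h (hAmem a ha)⟩
            · rw [Set.disjoint_left]
              intro x hx hxK
              exact hx (Or.inl hxK)
            · rw [Set.disjoint_left]
              intro x hx hxD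
              exact hx (Or.inr hxD)
            · ext x
              simp only [Set.mem_union, Set.mem_compl_iff, Set.mem_univ, iff_true]
              tauto
            · intro a ha d hd hadj
              by_cases haV : a ∈ Vs (i + 1)
              · exact ha (Or.inl (hND d hd a haV hadj.symm))
              · exact ha (Or.inr (hD.2.2.2 d hd a haV hadj.symm))
          by_cases hA2 : 2 ≤ wsum w ((K i ∪ D)ᶜ)
          · exact Or.inl ⟨i, hi, (K i ∪ D)ᶜ, D, hKcl, hsplitG, hA2, hD2⟩
          · right; left
            refine ⟨i, hi, fun C hC => ?_⟩
            by_cases hCD : ∃ c ∈ C, c ∈ D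
            · obtain ⟨c₀, hc₀C, hc₀D⟩ := hCD
              have hstep : ∀ d ∈ D, ∀ z ∈ (K i ∪ B i)ᶜ, G.Adj d z → z ∈ D := by
                intro d hd z hz hadj
                by_cases hzV : z ∈ Vs (i + 1)
                · exact absurd (hND d hd z hzV hadj) (fun h => hz (Or.inl h))
                · exact hD.2.2.2 d hd z hzV hadj
              have hc₀X : c₀ ∉ Vs i :=
                fact1 c₀ (hD.2.1 hc₀D) (fun h => hC.2.1 hc₀C (Or.inr h))
              have hCsub : C ⊆ {z | ReachableWithin G (Vs i)ᶜ c₀ z} := by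
                intro c hc
                obtain ⟨pw, hpw⟩ := hC.2.2.1 c₀ hc₀C c hc
                have hsupD : ∀ x ∈ pw.support, x ∈ D :=
                  stmt9_mem_of_walk_closed hstep pw hpw hc₀D
                exact ⟨pw, fun x hx =>
                  fact1 x (hD.2.1 (hsupD x hx)) (fun h => hpw x hx (Or.inr h))⟩
              have h1 := (inv _ (stmt9_reach_comp (G := G) (X := (Vs i)ᶜ) hc₀X)).1
              have h2 := stmt9_wsum_mono w hCsub
              omega
            · push_neg at hCD
              have hCsub : C ⊆ (K i ∪ D)ᶜ := by
                intro c hc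
                rw [Set.mem_compl_iff, Set.mem_union]
                push_neg
                exact ⟨fun h => hC.2.1 hc (Or.inl h), hCD c hc⟩
              have h2 := stmt9_wsum_mono w hCsub
              omega
        · right
          push_neg at hheavy
          intro D hD
          refine ⟨?_, ?_⟩
          · have := hheavy D hD
            omega
          · by_cases hDB : ∃ b ∈ D, b ∈ B i
            · obtain ⟨b₀, h1, h2⟩ := hDB
              have hND := NB D hD b₀ h1 h2
              refine hKcl.subset ?_
              rintro v ⟨hv1, u, hu, hadj⟩
              exact hND u hu v hv1 hadj
            · push_neg at hDB
              obtain ⟨u₀, hu₀⟩ := hD.1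
              obtain ⟨hu₀X, hDE⟩ := pure D hD hDB u₀ hu₀
              have hclE := (inv _ (stmt9_reach_comp (G := G) (X := (Vs i)ᶜ) hu₀X)).2
              refine hclE.subset ?_
              rintro v ⟨hv1, u, hu, hadj⟩
              exact ⟨hsubV hv1, u, hDE hu, hadj⟩
  rcases key p le_rfl with h | inv
  · exact h
  · right; right
    intro C hC
    have hVsp : Vs p = A (p - 1) ∪ K (p - 1) := by
      have h := hVsucc (p - 1) (by omega)
      rwa [Nat.sub_add_cancel hp] at h
    have heq : K (p - 1) ∪ A (p - 1) = Vs p := by rw [hVsp, Set.union_comm]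
    rw [heq] at hC
    exact (inv C hC).1
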